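/- Higman's Lemma: If (Q,≤) is a well quasiorder, then the set Q* of finite sequences over Q, ordered by the embeddability relation ≤*, is a well quasiorder, where (x₁,…,x_m) ≤* (y₁,…,y_n) iff there is a strictly increasing function φ: {1,…,m} → {1,…,n} with xᵢ ≤ y_{φ(i)} for all i. -/

import Mathlib

/-- The embeddability relation on finite sequences over a quasiorder. -/
def ListEmb {Q : Type*} (le : Q → Q → Prop) (u v : List Q) : Prop :=
  ∃ φ : Fin u.length → Fin v.length, StrictMono φ ∧ ∀ i, le (u.get i) (v.get (φ i))

/-- Higman's Lemma: If (Q,≤) is WQO then Q*, ordered by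
embeddability, is WQO. -/
theorem stmt_7 {Q : Type*} (le : Q → Q → Prop)
    (hrefl : ∀ x, le x x)
    (htrans : ∀ x y z, le x y → le y z → le x z)
    (hwqo : ∀ f : ℕ → Q, ∃ i j : ℕ, i < j ∧ le (f i) (f j)) :
    ∀ f : ℕ → List Q, ∃ i j : ℕ, i < j ∧ ListEmb le (f i) (f j) := by
  haveI : IsRefl Q le := ⟨hrefl⟩
  haveI : IsTrans Q le := ⟨htrans⟩
  haveI : IsPreorder Q le := { refl := hrefl, trans := htrans }
  have hpwo : (Set.univ : Set Q).PartiallyWellOrderedOn le := by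
    intro g
    exact hwqo (fun n => (g n).1)
  have H := hpwo.partiallyWellOrderedOn_sublistForall₂ le
  intro f
  obtain ⟨i, j, hij, hsub⟩ := H.exists_lt (f := f) (by simp)
  refine ⟨i, j, hij, ?_⟩
  rw [List.sublistForall₂_iff] at hsub
  obtain ⟨l, hfor, hsl⟩ := hsub
  rw [List.sublist_iff_exists_fin_orderEmbedding_get_eq] at hsl
  obtain ⟨e, he⟩ := hsl
  rw [List.forall₂_iff_get] at hfor
  obtain ⟨hlen, hget⟩ := hfor
  refine ⟨fun k => e (Fin.cast hlen k), ?_, ?_⟩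
  · intro a b hab
    exact e.strictMono (by simpa using hab)
  · intro k
    rw [← he]
    exact hget k k.isLt (hlen ▸ k.isLt)
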